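/- Let T, S be triangulated categories with t-structures, let F : T → S be a triangulated functor admitting a right adjoint G, and suppose there exists N ≥ 0 such that for every object L of T with H^j(L) = 0 for all j ≥ c, one has H^i(F L) = 0 for all i ≥ c + N. Then for every bounded-below object E of S (i.e. H^i(E) = 0 for i ≪ 0), the object G E is bounded below: there exists B such that H^i(G E) = 0 for all i ≤ c − B whenever H^i(E) = 0 for i < c. -/

import Mathlib

open CategoryTheory Limits Pretriangulated

lemma tstructure_hom_zero {C : Type*} [Category C] [Preadditive C] [HasZeroObject C]
    [HasShift C ℤ] [∀ n : ℤ, (shiftFunctor C n).Additive] [Pretriangulated C]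
    (t : Triangulated.TStructure C) {A B : C} (f : A ⟶ B) (n : ℤ)
    (hA : t.le n A) (hB : t.ge (n + 1) B) : f = 0 := by
  have h0 : (shiftFunctor C n).map f = 0 :=
    t.zero' _ (t.le_shift n n 0 (by omega) A hA) (t.ge_shift (n + 1) n 1 (by omega) B hB)
  apply (shiftFunctor C n).map_injective
  rw [h0, Functor.map_zero]

/-- Let `T`, `S` be triangulated categories with t-structures `tT`, `tS`, and let
`F : T ⥤ S` be a triangulated functor with right adjoint `G`.  Suppose `F` has
cohomological dimension `≤ N`: for every `c` and every `L` with `H^j(L) = 0` for `j ≥ c`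
(i.e. `L ∈ T^{≤ c-1}`), one has `H^i(F L) = 0` for `i ≥ c + N` (i.e. `F L ∈ S^{≤ c+N-1}`).
Then `G` sends bounded-below objects to bounded-below objects: there is a `B` such that
whenever `H^i(E) = 0` for `i < c` (i.e. `E ∈ S^{≥ c}`), one has `H^i(G E) = 0` for all
`i ≤ c - B` (i.e. `G E ∈ T^{≥ c - B + 1}`). -/
theorem rightAdjoint_preserves_boundedBelow
    {T S : Type*} [Category T] [Category S]
    [Preadditive T] [Preadditive S] [HasZeroObject T] [HasZeroObject S]
    [HasShift T ℤ] [HasShift S ℤ]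
    [∀ n : ℤ, (shiftFunctor T n).Additive] [∀ n : ℤ, (shiftFunctor S n).Additive]
    [Pretriangulated T] [Pretriangulated S]
    (tT : Triangulated.TStructure T) (tS : Triangulated.TStructure S)
    (F : T ⥤ S) [F.CommShift ℤ] [F.IsTriangulated]
    (G : S ⥤ T) (adj : F ⊣ G)
    (N : ℕ)
    (hF : ∀ (c : ℤ) (L : T), tT.IsLE L (c - 1) → tS.IsLE (F.obj L) (c + N - 1)) :
    ∃ B : ℤ, ∀ (c : ℤ) (E : S), tS.IsGE E c → tT.IsGE (G.obj E) (c - B + 1) := by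
  refine ⟨(N : ℤ) + 1, fun c E hE => ?_⟩
  -- Truncation triangle X ⟶ G E ⟶ Y ⟶ X⟦1⟧ with X ∈ T^{≤ c-N-1}, Y ∈ T^{≥ c-N}
  obtain ⟨X, Y, hX, hY, f, g, h, mem⟩ :=
    tT.exists_triangle (G.obj E) (c - N - 1) (c - N) (by omega)
  -- F X ∈ S^{≤ c-1}
  have hFX : tS.le (c - 1) (F.obj X) := by
    have := (hF (c - N) X ⟨hX⟩).le
    have heq : c - (N : ℤ) + N - 1 = c - 1 := by omega
    rwa [heq] at this
  -- Hence Hom(F X, E) = 0 and so f = 0 by adjunction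
  have hu : (adj.homEquiv X E).symm f = 0 :=
    tstructure_hom_zero tS _ (c - 1) hFX (by simpa using hE.ge)
  have hsymm0 : (adj.homEquiv X E).symm 0 = 0 := by
    rw [Adjunction.homEquiv_counit, Functor.map_zero, zero_comp]
  have hf : f = 0 := (adj.homEquiv X E).symm.injective (by rw [hu, hsymm0])
  -- From the triangle with zero first map, id_X factors through Hom(X, Y⟦-1⟧) = 0
  obtain ⟨φ, hφ⟩ := Triangle.coyoneda_exact₂ _ (inv_rot_of_distTriang _ mem) (𝟙 X) (by simp [hf]; exact Category.id_comp _)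
  have hφ0 : φ = 0 :=
    tstructure_hom_zero tT φ (c - N - 1) hX
      (tT.ge_antitone (show c - (N : ℤ) - 1 + 1 ≤ c - N + 1 by omega) _
        (tT.ge_shift (c - N) (-1) (c - N + 1) (by omega) Y hY))
  have hX0 : IsZero X := by
    rw [IsZero.iff_id_eq_zero, hφ, hφ0, zero_comp]
    rfl
  have : IsIso g := (Triangle.isZero₁_iff_isIso₂ _ mem).1 hX0
  refine ⟨?_⟩
  have heq : c - ((N : ℤ) + 1) + 1 = c - N := by omega
  rw [heq]
  exact ((tT.ge (c - N)).prop_iff_of_iso (asIso g).symm).1 hY
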